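/- Let (S(t)) be a C₀-semigroup on H, Q a bounded self-adjoint nonnegative operator, and (S_Q(t))_{t≥0} a C₀-semigroup of self-adjoint contractions on H with S(t)Q^{1/2} = Q^{1/2}S_Q(t) for all t ≥ 0. Then for every t > 0 and all h, x ∈ H: ⟨S(t)Q^{1/2}h, x⟩² ≤ (1/t)|h|²⟨Q_tx, x⟩, where Q_tx = ∫₀^t S(s)QS(s)*x ds. (Equivalently, ‖Q_t^{−1/2}S(t)Q^{1/2}‖ ≤ 1/√t.) -/

import Mathlib

/-!
STATEMENT 12.  Let (S(t)) be a C₀-semigroup on a separable real Hilbert space H, Q a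
bounded self-adjoint nonnegative operator with square root Q^{1/2}, and (S_Q(t)) a
C₀-semigroup of self-adjoint contractions on H with S(t)Q^{1/2} = Q^{1/2}S_Q(t) for all
t ≥ 0.  Then for every t > 0 and all h, x ∈ H,
⟨S(t)Q^{1/2}h, x⟩² ≤ (1/t)|h|²⟨Q_tx, x⟩, where Q_tx = ∫₀^t S(s)QS(s)*x ds
(equivalently, ‖Q_t^{−1/2}S(t)Q^{1/2}‖ ≤ 1/√t).
-/

open MeasureTheory Filter Set ContinuousLinearMap
open scoped RealInnerProductSpace

noncomputable section

variable {H : Type*} [NormedAddCommGroup H] [InnerProductSpace ℝ H] [CompleteSpace H]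

theorem statement12 [TopologicalSpace.SeparableSpace H]
    (S : ℝ → H →L[ℝ] H)
    (hS0 : S 0 = 1)
    (hSadd : ∀ s t : ℝ, 0 ≤ s → 0 ≤ t → S (s + t) = (S s).comp (S t))
    (hScont : ∀ x : H, ContinuousOn (fun t => S t x) (Set.Ici 0))
    (Q sqrtQ : H →L[ℝ] H) (hQsa : IsSelfAdjoint Q) (hQnn : ∀ x : H, 0 ≤ ⟪Q x, x⟫)
    (hsqrt_sa : IsSelfAdjoint sqrtQ) (hsqrt_nn : ∀ x : H, 0 ≤ ⟪sqrtQ x, x⟫)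
    (hsqrt_sq : sqrtQ.comp sqrtQ = Q)
    (SQ : ℝ → H →L[ℝ] H)
    (hSQ0 : SQ 0 = 1)
    (hSQadd : ∀ s t : ℝ, 0 ≤ s → 0 ≤ t → SQ (s + t) = (SQ s).comp (SQ t))
    (hSQcont : ∀ x : H, ContinuousOn (fun t => SQ t x) (Set.Ici 0))
    (hSQsa : ∀ t : ℝ, 0 ≤ t → IsSelfAdjoint (SQ t))
    (hSQcontr : ∀ t : ℝ, 0 ≤ t → ‖SQ t‖ ≤ 1)
    (hintertwine : ∀ t : ℝ, 0 ≤ t → (S t).comp sqrtQ = sqrtQ.comp (SQ t)) :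
    ∀ t : ℝ, 0 < t → ∀ h x : H,
      ⟪S t (sqrtQ h), x⟫ ^ 2 ≤
        (1 / t) * ‖h‖ ^ 2 *
          ⟪∫ s in Set.Ioc (0:ℝ) t, S s (Q (ContinuousLinearMap.adjoint (S s) x)), x⟫ := by
  intro t ht h x
  have htn : (0:ℝ) ≤ t := ht.le
  have hadjsqrt : ContinuousLinearMap.adjoint sqrtQ = sqrtQ :=
    ContinuousLinearMap.isSelfAdjoint_iff'.mp hsqrt_sa
  set c : ℝ := ⟪S t (sqrtQ h), x⟫ with hc
  set f : ℝ → H := fun s => S s (Q (ContinuousLinearMap.adjoint (S s) x)) with hfdef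
  set G : ℝ → ℝ := fun s => ⟪f s, x⟫ with hGdef
  -- G s = ‖sqrtQ ((S s)* x)‖ ^ 2
  have hGval : ∀ s : ℝ, G s = ‖sqrtQ (ContinuousLinearMap.adjoint (S s) x)‖ ^ 2 := by
    intro s
    set y := ContinuousLinearMap.adjoint (S s) x with hy
    have h1 : G s = ⟪Q y, y⟫ := by
      simp only [hGdef, hfdef]
      rw [← ContinuousLinearMap.adjoint_inner_right (S s)]
    have h2 : Q y = sqrtQ (sqrtQ y) := by rw [← hsqrt_sq]; rfl
    rw [h1, h2]
    nth_rewrite 1 [← hadjsqrt]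
    rw [ContinuousLinearMap.adjoint_inner_left, real_inner_self_eq_norm_sq]
  have hGnn : ∀ s : ℝ, 0 ≤ G s := fun s => by rw [hGval]; positivity
  -- pointwise key inequality
  have key : ∀ s ∈ Set.Ioc (0:ℝ) t, c ^ 2 ≤ ‖h‖ ^ 2 * G s := by
    intro s hs
    have hs0 : (0:ℝ) ≤ s := hs.1.le
    have hts : (0:ℝ) ≤ t - s := by linarith [hs.2]
    have hdecomp : S t (sqrtQ h) = S s (sqrtQ (SQ (t - s) h)) := by
      have e1 : S t = (S s).comp (S (t - s)) := by
        have := hSadd s (t - s) hs0 hts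
        rw [show s + (t - s) = t by ring] at this
        exact this
      have e2 : S (t - s) (sqrtQ h) = sqrtQ (SQ (t - s) h) := by
        have := hintertwine (t - s) hts
        calc S (t - s) (sqrtQ h) = ((S (t - s)).comp sqrtQ) h := rfl
          _ = (sqrtQ.comp (SQ (t - s))) h := by rw [this]
          _ = sqrtQ (SQ (t - s) h) := rfl
      rw [e1]
      calc ((S s).comp (S (t - s))) (sqrtQ h) = S s (S (t - s) (sqrtQ h)) := rfl
        _ = S s (sqrtQ (SQ (t - s) h)) := by rw [e2]
    have hinner : c = ⟪SQ (t - s) h, sqrtQ (ContinuousLinearMap.adjoint (S s) x)⟫ := by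
      rw [hc, hdecomp, ← ContinuousLinearMap.adjoint_inner_right (S s)]
      nth_rewrite 1 [← hadjsqrt]
      rw [ContinuousLinearMap.adjoint_inner_left]
    set u := SQ (t - s) h
    set v := sqrtQ (ContinuousLinearMap.adjoint (S s) x)
    have hcs : c ^ 2 ≤ ‖u‖ ^ 2 * ‖v‖ ^ 2 := by
      have := real_inner_mul_inner_self_le u v
      rw [real_inner_self_eq_norm_sq, real_inner_self_eq_norm_sq] at this
      rw [hinner, sq]
      exact this
    have hu : ‖u‖ ≤ ‖h‖ := by
      calc ‖u‖ ≤ ‖SQ (t - s)‖ * ‖h‖ := (SQ (t - s)).le_opNorm h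
        _ ≤ 1 * ‖h‖ := by
            have := hSQcontr (t - s) hts
            gcongr
        _ = ‖h‖ := one_mul _
    have : ‖u‖ ^ 2 ≤ ‖h‖ ^ 2 := by
      have hu0 : (0:ℝ) ≤ ‖u‖ := norm_nonneg _
      nlinarith
    calc c ^ 2 ≤ ‖u‖ ^ 2 * ‖v‖ ^ 2 := hcs
      _ ≤ ‖h‖ ^ 2 * ‖v‖ ^ 2 := by
          have : (0:ℝ) ≤ ‖v‖ ^ 2 := by positivity
          nlinarith
      _ = ‖h‖ ^ 2 * G s := by rw [hGval]
  -- uniform bound on operator norms on [0, t]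
  obtain ⟨M, hM⟩ : ∃ M, ∀ s : Set.Icc (0:ℝ) t, ‖S (s : ℝ)‖ ≤ M := by
    apply banach_steinhaus
    intro v
    obtain ⟨C, hC⟩ := (isCompact_Icc (a := (0:ℝ)) (b := t)).exists_bound_of_continuousOn
      ((hScont v).mono (Set.Icc_subset_Ici_self))
    exact ⟨C, fun s => hC s s.2⟩
  -- measurability of f on Ioc 0 t via Hilbert basis partial sums
  obtain ⟨w, b, hb⟩ := exists_hilbertBasis ℝ H
  have hwc : w.Countable := by
    obtain ⟨D, hDc, hDd⟩ := TopologicalSpace.exists_countable_dense H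
    have hchoice : ∀ p : H, ∃ d ∈ D, dist p d < 1 / 2 := fun p =>
      hDd.exists_dist_lt p (by norm_num)
    choose d hdD hdist using hchoice
    have hon : Orthonormal ℝ ((↑) : w → H) := hb ▸ b.orthonormal
    apply Set.countable_of_injective_of_countable_image (f := d)
    · intro p hp q hq hpq
      by_contra hne
      have hb1 : ‖p‖ = 1 := hon.1 ⟨p, hp⟩
      have hb2 : ‖q‖ = 1 := hon.1 ⟨q, hq⟩
      have hio : ⟪p, q⟫ = 0 := by
        have : (⟨p, hp⟩ : w) ≠ ⟨q, hq⟩ := fun hcontra => hne (congrArg Subtype.val hcontra)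
        exact hon.2 this
      have hns : ‖p - q‖ ^ 2 = 2 := by
        rw [@norm_sub_sq_real]
        rw [hb1, hb2, hio]; ring
      have hd1 : dist p q < 1 := by
        calc dist p q ≤ dist p (d p) + dist (d p) q := dist_triangle _ _ _
          _ = dist p (d p) + dist q (d q) := by rw [hpq, dist_comm (d q) q]
          _ < 1 / 2 + 1 / 2 := add_lt_add (hdist p) (hdist q)
          _ = 1 := by norm_num
      rw [dist_eq_norm] at hd1
      nlinarith [norm_nonneg (p - q)]
    · exact hDc.mono (by rintro _ ⟨p, hp, rfl⟩; exact hdD p)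
  haveI : Countable ↥w := hwc.to_subtype
  have hfm : AEStronglyMeasurable f (volume.restrict (Set.Ioc (0:ℝ) t)) := by
    apply aestronglyMeasurable_of_tendsto_ae (atTop : Filter (Finset ↥w))
      (f := fun F : Finset ↥w => fun s : ℝ =>
        ∑ i ∈ F, ⟪S s ((b i : H)), x⟫ • S s (Q (b i)))
    · intro F
      apply ContinuousOn.aestronglyMeasurable _ measurableSet_Ioc
      apply ContinuousOn.mono _ (Set.Ioc_subset_Icc_self.trans Set.Icc_subset_Ici_self)
      apply continuousOn_finset_sum
      intro i _
      exact ((continuous_inner.comp_continuousOn ((hScont (b i)).prodMk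
        (continuousOn_const (c := x))))).smul (hScont (Q (b i)))
    · refine Eventually.of_forall (fun s => ?_)
      have hsum : HasSum (fun i : w => ⟪S s ((b i : H)), x⟫ • S s (Q (b i))) (f s) := by
        have h0 := (b.hasSum_repr (ContinuousLinearMap.adjoint (S s) x)).mapL ((S s).comp Q)
        have heq : (fun i : w => ⟪S s ((b i : H)), x⟫ • S s (Q (b i)))
            = fun i : w => ((S s).comp Q)
                (b.repr (ContinuousLinearMap.adjoint (S s) x) i • (b i : H)) := by
          funext i
          rw [_root_.map_smul, b.repr_apply_apply, ContinuousLinearMap.adjoint_inner_right]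
          rfl
        rw [heq]
        exact h0
      exact hsum
  -- integrability of f
  have hQx : ∀ s ∈ Set.Ioc (0:ℝ) t, ‖f s‖ ≤ M * (‖Q‖ * (M * ‖x‖)) := by
    intro s hs
    have hMs : ‖S s‖ ≤ M := hM ⟨s, ⟨hs.1.le, hs.2⟩⟩
    have hM0 : (0:ℝ) ≤ M := le_trans (norm_nonneg _) hMs
    have hadj : ‖ContinuousLinearMap.adjoint (S s)‖ = ‖S s‖ :=
      LinearIsometryEquiv.norm_map ContinuousLinearMap.adjoint (S s)
    calc ‖f s‖ ≤ ‖S s‖ * ‖Q (ContinuousLinearMap.adjoint (S s) x)‖ := (S s).le_opNorm _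
      _ ≤ ‖S s‖ * (‖Q‖ * ‖ContinuousLinearMap.adjoint (S s) x‖) := by
          have := Q.le_opNorm (ContinuousLinearMap.adjoint (S s) x)
          gcongr
      _ ≤ ‖S s‖ * (‖Q‖ * (‖ContinuousLinearMap.adjoint (S s)‖ * ‖x‖)) := by
          have := (ContinuousLinearMap.adjoint (S s)).le_opNorm x
          gcongr
      _ = ‖S s‖ * (‖Q‖ * (‖S s‖ * ‖x‖)) := by rw [hadj]
      _ ≤ M * (‖Q‖ * (M * ‖x‖)) := by gcongr
  have hfi : IntegrableOn f (Set.Ioc (0:ℝ) t) := by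
    have hconst : IntegrableOn (fun _ : ℝ => M * (‖Q‖ * (M * ‖x‖))) (Set.Ioc (0:ℝ) t) :=
      (integrableOn_const_iff).mpr (Or.inr (by rw [Real.volume_Ioc]; exact ENNReal.ofReal_lt_top))
    apply Integrable.mono' hconst hfm
    rw [ae_restrict_iff' measurableSet_Ioc]
    exact Eventually.of_forall hQx
  have hGi : IntegrableOn G (Set.Ioc (0:ℝ) t) := by
    have := (innerSL ℝ x).integrable_comp hfi
    simp only [innerSL_apply_apply] at this
    have heq : (fun s => ⟪x, f s⟫) = G := by
      funext s; rw [hGdef]; exact (real_inner_comm x (f s)).symm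
    rwa [heq] at this
  -- integrate the pointwise inequality
  have hmono : ∫ s in Set.Ioc (0:ℝ) t, c ^ 2 ≤ ∫ s in Set.Ioc (0:ℝ) t, ‖h‖ ^ 2 * G s := by
    apply setIntegral_mono_on
    · exact (integrableOn_const_iff).mpr (Or.inr (by rw [Real.volume_Ioc]; exact ENNReal.ofReal_lt_top))
    · exact hGi.const_mul _
    · exact measurableSet_Ioc
    · exact key
  have h1 : ∫ s in Set.Ioc (0:ℝ) t, c ^ 2 = t * c ^ 2 := by
    rw [setIntegral_const, Real.volume_real_Ioc, smul_eq_mul]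
    rw [show t - 0 = t by ring, max_eq_left htn]
  have h2 : ∫ s in Set.Ioc (0:ℝ) t, ‖h‖ ^ 2 * G s
      = ‖h‖ ^ 2 * ⟪∫ s in Set.Ioc (0:ℝ) t, f s, x⟫ := by
    rw [integral_const_mul]
    congr 1
    have h3 := integral_inner (𝕜 := ℝ) hfi x
    rw [real_inner_comm]
    rw [← h3]
    congr 1
    funext s
    exact (real_inner_comm (f s) x).symm
  rw [h1, h2] at hmono
  have hfinal : c ^ 2 ≤ (‖h‖ ^ 2 * ⟪∫ s in Set.Ioc (0:ℝ) t, f s, x⟫) / t := by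
    rw [le_div_iff₀ ht]
    linarith
  calc c ^ 2 ≤ (‖h‖ ^ 2 * ⟪∫ s in Set.Ioc (0:ℝ) t, f s, x⟫) / t := hfinal
    _ = 1 / t * ‖h‖ ^ 2 * ⟪∫ s in Set.Ioc (0:ℝ) t, f s, x⟫ := by ring
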